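/- arXiv:2605.06854 — 3 statements merged into one kernel-verified Lean document; each statement's English description precedes it below -/
import Mathlib

section
/- Let K ⊆ ℝ^N be a nonempty compact convex set. Then there exists a Lebesgue-null set N₀ ⊆ ℝ^N such that for every c ∈ ℝ^N \ N₀, the set argmin_{x ∈ K} ⟨c, x⟩ is a singleton whose unique element is an extreme point of K. -/
open MeasureTheory

/-- for a nonempty compact convex `K ⊆ ℝ^N` there is a Lebesgue
null set `N₀` such that for every `c ∉ N₀`, the minimizers of `⟨c, ·⟩` over `K`
form a singleton whose element is an extreme point of `K`. -/
theorem generic_linear_functional_exposes_extreme_point {N : ℕ}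
    (K : Set (EuclideanSpace ℝ (Fin N))) (hne : K.Nonempty)
    (hcpt : IsCompact K) (hconv : Convex ℝ K) :
    ∃ N₀ : Set (EuclideanSpace ℝ (Fin N)), volume N₀ = 0 ∧
      ∀ c ∉ N₀, ∃ x : EuclideanSpace ℝ (Fin N),
        {y | y ∈ K ∧ ∀ z ∈ K, (inner ℝ c y : ℝ) ≤ inner ℝ c z} = {x} ∧
        x ∈ Set.extremePoints ℝ K := by
  classical
  obtain ⟨R, hR⟩ := hcpt.isBounded.exists_norm_le
  set f : EuclideanSpace ℝ (Fin N) → ℝ :=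
    fun c => sInf ((fun x => (inner ℝ c x : ℝ)) '' K) with hfdef
  have hmin : ∀ c : EuclideanSpace ℝ (Fin N),
      ∃ x ∈ K, ∀ z ∈ K, (inner ℝ c x : ℝ) ≤ inner ℝ c z := by
    intro c
    obtain ⟨x, hxK, hx⟩ := hcpt.exists_isMinOn hne
      ((continuous_const.inner continuous_id).continuousOn :
        ContinuousOn (fun x => (inner ℝ c x : ℝ)) K)
    exact ⟨x, hxK, fun z hz => hx hz⟩
  have hfeq : ∀ c x, x ∈ K → (∀ z ∈ K, (inner ℝ c x : ℝ) ≤ inner ℝ c z) →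
      f c = inner ℝ c x := by
    intro c x hx hxmin
    refine IsLeast.csInf_eq ⟨⟨x, hx, rfl⟩, ?_⟩
    rintro _ ⟨z, hz, rfl⟩
    exact hxmin z hz
  have hfle : ∀ c, ∀ z ∈ K, f c ≤ inner ℝ c z := by
    intro c z hz
    obtain ⟨x, hx, hxmin⟩ := hmin c
    rw [hfeq c x hx hxmin]
    exact hxmin z hz
  have key : ∀ c c', f c ≤ f c' + R * ‖c - c'‖ := by
    intro c c'
    obtain ⟨x, hx, hxmin⟩ := hmin c'
    have h1 : f c ≤ inner ℝ c x := hfle c x hx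
    have h2 : f c' = inner ℝ c' x := hfeq c' x hx hxmin
    have h3 : (inner ℝ c x : ℝ) = inner ℝ c' x + inner ℝ (c - c') x := by
      rw [← inner_add_left]
      congr 1
      abel
    have h4 : (inner ℝ (c - c') x : ℝ) ≤ R * ‖c - c'‖ := by
      calc (inner ℝ (c - c') x : ℝ) ≤ ‖c - c'‖ * ‖x‖ := real_inner_le_norm _ _
        _ ≤ ‖c - c'‖ * R := by nlinarith [hR x hx, norm_nonneg (c - c')]
        _ = R * ‖c - c'‖ := mul_comm _ _
    linarith
  have hlip : LipschitzWith (Real.toNNReal R) f := by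
    apply LipschitzWith.of_dist_le_mul
    intro c c'
    rw [Real.dist_eq, dist_eq_norm]
    have h1 := key c c'
    have h2 := key c' c
    have hRc : R ≤ (Real.toNNReal R : ℝ) := Real.le_coe_toNNReal R
    have hrev : ‖c' - c‖ = ‖c - c'‖ := norm_sub_rev _ _
    have hmul : R * ‖c - c'‖ ≤ (Real.toNNReal R : ℝ) * ‖c - c'‖ :=
      mul_le_mul_of_nonneg_right hRc (norm_nonneg _)
    rw [hrev] at h2
    rw [abs_sub_le_iff]
    constructor <;> linarith
  have hae : ∀ᵐ c : EuclideanSpace ℝ (Fin N) ∂volume, DifferentiableAt ℝ f c :=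
    hlip.ae_differentiableAt
  refine ⟨{c | ¬ DifferentiableAt ℝ f c}, ae_iff.mp hae, ?_⟩
  intro c hc
  simp only [Set.mem_setOf_eq, not_not] at hc
  obtain ⟨x, hxK, hxmin⟩ := hmin c
  -- the derivative identifies any minimizer
  have hder : ∀ y ∈ K, (∀ z ∈ K, (inner ℝ c y : ℝ) ≤ inner ℝ c z) →
      ∀ v, (fderiv ℝ f c) v = inner ℝ v y := by
    intro y hyK hymin v
    have hfc : f c = inner ℝ c y := hfeq c y hyK hymin
    have hg : HasDerivAt (fun t : ℝ => f (c + t • v)) ((fderiv ℝ f c) v) 0 := by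
      have h1 : HasDerivAt (fun t : ℝ => c + t • v) v 0 := by
        simpa using ((hasDerivAt_id (0 : ℝ)).smul_const v).const_add c
      have h2 : HasFDerivAt f (fderiv ℝ f c) (c + (0 : ℝ) • v) := by
        simpa using hc.hasFDerivAt
      exact h2.comp_hasDerivAt 0 h1
    have hg' : HasDerivAt (fun t : ℝ => f c + t * (inner ℝ v y : ℝ))
        (inner ℝ v y : ℝ) 0 := by
      simpa using ((hasDerivAt_id (0 : ℝ)).mul_const (inner ℝ v y : ℝ)).const_add (f c)
    have hh : HasDerivAt (fun t : ℝ => f (c + t • v) - (f c + t * (inner ℝ v y : ℝ)))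
        ((fderiv ℝ f c) v - inner ℝ v y) 0 := hg.sub hg'
    have hle : ∀ t : ℝ, f (c + t • v) - (f c + t * (inner ℝ v y : ℝ)) ≤ 0 := by
      intro t
      have h1 : f (c + t • v) ≤ inner ℝ (c + t • v) y := hfle _ y hyK
      have h2 : (inner ℝ (c + t • v) y : ℝ) = inner ℝ c y + t * inner ℝ v y := by
        simp [inner_add_left, real_inner_smul_left, Finset.mul_sum, mul_assoc]
      rw [hfc]
      linarith
    have hmax : IsLocalMax (fun t : ℝ => f (c + t • v) - (f c + t * (inner ℝ v y : ℝ))) 0 := by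
      apply Filter.Eventually.of_forall
      intro t
      simpa using hle t
    have := hmax.hasDerivAt_eq_zero hh
    linarith [this]
  have huniq : ∀ y ∈ K, (∀ z ∈ K, (inner ℝ c y : ℝ) ≤ inner ℝ c z) → y = x := by
    intro y hy hym
    refine ext_inner_left ℝ fun v => ?_
    rw [← hder y hy hym v, hder x hxK hxmin v]
  refine ⟨x, ?_, ?_⟩
  · ext y
    simp only [Set.mem_setOf_eq, Set.mem_singleton_iff]
    constructor
    · rintro ⟨hy, hym⟩; exact huniq y hy hym
    · rintro rfl; exact ⟨hxK, hxmin⟩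
  · rw [mem_extremePoints]
    refine ⟨hxK, fun y hy z hz hseg => ?_⟩
    obtain ⟨a, b, ha, hb, hab, hsum⟩ := hseg
    have h1 : (inner ℝ c x : ℝ) = a * inner ℝ c y + b * inner ℝ c z := by
      rw [← hsum]
      simp only [inner_add_right, real_inner_smul_right]
    have h2 : (inner ℝ c x : ℝ) ≤ inner ℝ c y := hxmin y hy
    have h3 : (inner ℝ c x : ℝ) ≤ inner ℝ c z := hxmin z hz
    have hax : a * (inner ℝ c x : ℝ) + b * inner ℝ c x = inner ℝ c x := by
      rw [← add_mul, hab, one_mul]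
    have h4 : a * (inner ℝ c y : ℝ) ≤ a * inner ℝ c x := by
      linarith [mul_le_mul_of_nonneg_left h3 hb.le]
    have h5 : b * (inner ℝ c z : ℝ) ≤ b * inner ℝ c x := by
      linarith [mul_le_mul_of_nonneg_left h2 ha.le]
    have hy' : (inner ℝ c y : ℝ) = inner ℝ c x :=
      mul_left_cancel₀ ha.ne' (le_antisymm h4 (mul_le_mul_of_nonneg_left h2 ha.le))
    have hz' : (inner ℝ c z : ℝ) = inner ℝ c x :=
      mul_left_cancel₀ hb.ne' (le_antisymm h5 (mul_le_mul_of_nonneg_left h3 hb.le))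
    have hymin : ∀ w ∈ K, (inner ℝ c y : ℝ) ≤ inner ℝ c w := fun w hw => hy' ▸ hxmin w hw
    have hzmin : ∀ w ∈ K, (inner ℝ c z : ℝ) ≤ inner ℝ c w := fun w hw => hz' ▸ hxmin w hw
    exact ⟨huniq y hy hymin, huniq z hz hzmin⟩
end

section
/- With ι as above, for every w ∈ ℝ and u ∈ ℝ^{n+1}, ι(w² u^{⊗2d}) = (w u^{⊗d}) ∨ (w u^{⊗d}), where u^{⊗2d} is expanded in the basis c_γ via u^{⊗2d} = Σ_γ u^γ c_γ and u^{⊗d} = Σ_α u^α b_α. -/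
/-- Multi-indices of total degree `d` in `n+1` variables. -/
def Dd (n d : ℕ) := {α : Fin (n + 1) → Fin (d + 1) // ∑ i, (α i : ℕ) = d}

/-- Multi-indices of total degree `2d` in `n+1` variables. -/
def Gg (n d : ℕ) := {γ : Fin (n + 1) → Fin (2 * d + 1) // ∑ i, (γ i : ℕ) = 2 * d}

instance (n d : ℕ) : DecidableEq (Dd n d) := by unfold Dd; infer_instance
instance (n d : ℕ) : Fintype (Dd n d) := by unfold Dd; infer_instance
instance (n d : ℕ) : Fintype (Gg n d) := by unfold Gg; infer_instance

/-- The sum `α + β` of an unordered pair `{α, β}` of degree-`d` multi-indices. -/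
def sadd (n d : ℕ) : Sym2 (Dd n d) → (Fin (n + 1) → ℕ) :=
  Sym2.lift ⟨fun a b => fun i => (a.1 i : ℕ) + (b.1 i : ℕ),
    fun _ _ => funext fun _ => Nat.add_comm _ _⟩

lemma sadd_sum (n d : ℕ) (p : Sym2 (Dd n d)) : ∑ i, sadd n d p i = 2 * d := by
  induction p using Sym2.ind with
  | _ a b => simp [sadd, Finset.sum_add_distrib, a.2, b.2, two_mul]

/-- with `ι` defined on the basis by
`ι(c_γ) = ∑_{α+β=γ, α≤β} (2 − δ_{α,β}) b_α ∨ b_β`, for every `w ∈ ℝ` and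
`u ∈ ℝ^{n+1}` one has `ι(w² u^{⊗2d}) = (w u^{⊗d}) ∨ (w u^{⊗d})`, where
`u^{⊗2d} = ∑_γ u^γ c_γ` and
`(w u^{⊗d}) ∨ (w u^{⊗d}) = ∑_p w² u^{α+β} (2 − δ_{α,β}) b_α ∨ b_β`
(the sum over unordered pairs `p = {α, β}`). -/
theorem iota_of_square (n d : ℕ) (hd : 0 < d)
    {M : Type*} [AddCommGroup M] [Module ℝ M]
    (B : Module.Basis (Sym2 (Dd n d)) ℝ M)
    (ι : (Gg n d →₀ ℝ) →ₗ[ℝ] M)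
    (hι : ∀ (γ : Gg n d) (p : Sym2 (Dd n d)),
      B.repr (ι (Finsupp.single γ 1)) p =
        if sadd n d p = (fun i => (γ.1 i : ℕ)) then
          (if p.IsDiag then 1 else 2) else 0)
    (w : ℝ) (u : Fin (n + 1) → ℝ) :
    ι (∑ γ : Gg n d, (w ^ 2 * ∏ i, u i ^ (γ.1 i : ℕ)) • Finsupp.single γ 1) =
      ∑ p : Sym2 (Dd n d),
        (w ^ 2 * (∏ i, u i ^ sadd n d p i) * (if p.IsDiag then 1 else 2)) • B p := by
  classical
  have hle : ∀ (p : Sym2 (Dd n d)) (i : Fin (n+1)), sadd n d p i < 2*d+1 := fun p i =>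
    Nat.lt_succ_of_le (by rw [← sadd_sum n d p]
                          exact Finset.single_le_sum (fun _ _ => Nat.zero_le _) (Finset.mem_univ i))
  set γp : Sym2 (Dd n d) → Gg n d := fun p =>
    ⟨fun i => ⟨sadd n d p i, hle p i⟩, by simpa using sadd_sum n d p⟩ with hγp
  have hcond : ∀ (p : Sym2 (Dd n d)) (γ : Gg n d),
      ((sadd n d p = fun i => (γ.1 i : ℕ)) ↔ γ = γp p) := by
    intro p γ
    constructor
    · intro h
      apply Subtype.ext; funext i; apply Fin.ext
      simp [hγp, ← congrFun h i]
    · intro h; subst h; funext i; simp [hγp]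
  apply B.repr.injective
  ext p
  simp only [map_sum]
  simp only [map_smul, Finsupp.coe_finset_sum, Finset.sum_apply, Finsupp.coe_smul, Pi.smul_apply,
    smul_eq_mul, hι, Module.Basis.repr_self, Finsupp.single_apply, hcond, mul_ite, mul_one, mul_zero]
  rw [Finset.sum_ite_eq' Finset.univ (γp p), Finset.sum_ite_eq' Finset.univ p]
  simp [hγp]
  intro h; exact absurd (Finset.mem_univ _) h
end

section
/- Let ψ : Sym²(Sym^d(ℝ^{n+1})) → Sym(N) with N = binom(n+d, d) be the isomorphism sending b_α ∨ b_β to (1/2)(E_{α,β} + E_{β,α}). Then ψ(im(ι)) equals the generalized multivariate Hankel subspace H := {X ∈ Sym(N) : X_{α,β} = X_{α′,β′} whenever α + β = α′ + β′}, where ι is the map ι(c_γ) = Σ_{α+β=γ, α≤β} (2 − δ_{α,β}) b_α ∨ b_β. -/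
open Matrix

/-- `ψ(b_α ∨ b_β) = (1/2)(E_{α,β} + E_{β,α})`, as a function of the unordered
pair `{α, β}`. -/
noncomputable def psiBasis (n d : ℕ) :
    Sym2 (Dd n d) → Matrix (Dd n d) (Dd n d) ℝ :=
  Sym2.lift ⟨fun a b =>
      (2 : ℝ)⁻¹ • (Matrix.single a b 1 + Matrix.single b a 1),
    fun a b => by simp [add_comm]⟩

/-- The generalized multivariate Hankel subspace: matrices indexed by degree-`d`
multi-indices with `X_{α,β} = X_{α′,β′}` whenever `α + β = α′ + β′`. -/
def hankel (n d : ℕ) : Submodule ℝ (Matrix (Dd n d) (Dd n d) ℝ) where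
  carrier := {X | ∀ a b a' b' : Dd n d,
    ((fun i => (a.1 i : ℕ) + (b.1 i : ℕ)) = fun i => (a'.1 i : ℕ) + (b'.1 i : ℕ)) →
      X a b = X a' b'}
  add_mem' := by
    intro X Y hX hY a b a' b' h
    simp only [Matrix.add_apply, hX a b a' b' h, hY a b a' b' h]
  zero_mem' := by intro a b a' b' h; rfl
  smul_mem' := by
    intro c X hX a b a' b' h
    simp only [Matrix.smul_apply, hX a b a' b' h]

instance (n d : ℕ) : DecidableEq (Gg n d) := by unfold Gg; infer_instance

def gsum (n d : ℕ) (a b : Dd n d) : Gg n d :=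
  ⟨fun i => ⟨(a.1 i : ℕ) + (b.1 i : ℕ), by
      have ha := (a.1 i).isLt; have hb := (b.1 i).isLt; omega⟩, by
    have h : ∑ i, ((a.1 i : ℕ) + (b.1 i : ℕ)) = 2 * d := by
      rw [Finset.sum_add_distrib, a.2, b.2]; ring
    simpa using h⟩

lemma gsum_iff (n d : ℕ) (a b : Dd n d) (γ : Gg n d) :
    ((fun i => (a.1 i : ℕ) + (b.1 i : ℕ)) = fun i => (γ.1 i : ℕ)) ↔ γ = gsum n d a b := by
  constructor
  · intro h
    apply Subtype.ext; funext i
    exact Fin.ext (congrFun h i).symm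
  · intro h; subst h; rfl

lemma coeff_mul (n d : ℕ) (a b c e : Dd n d) :
    (if (Sym2.mk c e).IsDiag then (1:ℝ) else 2) * psiBasis n d (Sym2.mk c e) a b
      = if Sym2.mk c e = Sym2.mk a b then 1 else 0 := by
  have hps : psiBasis n d (Sym2.mk c e) a b
      = (2 : ℝ)⁻¹ * ((if c = a ∧ e = b then (1:ℝ) else 0) + (if e = a ∧ c = b then 1 else 0)) := by
    simp [psiBasis, Matrix.single, Matrix.smul_apply, Matrix.add_apply, Matrix.of_apply]
    split_ifs <;> norm_num
  rw [hps]
  simp only [Sym2.mk_isDiag_iff, Sym2.eq_iff]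
  by_cases hce : c = e <;> by_cases hca : c = a <;> by_cases heb : e = b <;>
    by_cases hea : e = a <;> by_cases hcb : c = b <;>
    simp_all <;> norm_num

/-- `ψ(im ι)` equals the generalized multivariate Hankel
subspace, where `ι(c_γ) = ∑_{α+β=γ, α≤β} (2 − δ_{α,β}) b_α ∨ b_β` and
`ψ(b_α ∨ b_β) = (1/2)(E_{α,β} + E_{β,α})`. -/
theorem psi_image_iota_eq_hankel (n d : ℕ) (hd : 0 < d)
    {M : Type*} [AddCommGroup M] [Module ℝ M]
    (B : Module.Basis (Sym2 (Dd n d)) ℝ M)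
    (ι : (Gg n d →₀ ℝ) →ₗ[ℝ] M)
    (hι : ∀ (γ : Gg n d) (p : Sym2 (Dd n d)),
      B.repr (ι (Finsupp.single γ 1)) p =
        if sadd n d p = (fun i => (γ.1 i : ℕ)) then
          (if p.IsDiag then 1 else 2) else 0)
    (ψ : M →ₗ[ℝ] Matrix (Dd n d) (Dd n d) ℝ)
    (hψ : ∀ p : Sym2 (Dd n d), ψ (B p) = psiBasis n d p) :
    Submodule.map ψ (LinearMap.range ι) = hankel n d := by
  classical
  -- entry formula for singles
  have single1 : ∀ (γ : Gg n d) (a b : Dd n d),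
      ψ (ι (Finsupp.single γ 1)) a b = if γ = gsum n d a b then (1:ℝ) else 0 := by
    intro γ a b
    have hexp : ψ (ι (Finsupp.single γ 1)) =
        ∑ p : Sym2 (Dd n d), B.repr (ι (Finsupp.single γ 1)) p • psiBasis n d p := by
      conv_lhs => rw [← B.sum_repr (ι (Finsupp.single γ 1))]
      rw [map_sum]
      exact Finset.sum_congr rfl fun p _ => by rw [_root_.map_smul, hψ]
    rw [hexp, Matrix.sum_apply]
    have hterm : ∀ p : Sym2 (Dd n d),
        (B.repr (ι (Finsupp.single γ 1)) p • psiBasis n d p) a b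
          = if p = Sym2.mk a b then
              (if sadd n d p = (fun i => (γ.1 i : ℕ)) then (1:ℝ) else 0) else 0 := by
      intro p
      induction p using Sym2.ind with
      | _ c e =>
        rw [Matrix.smul_apply, hι γ (Sym2.mk c e), smul_eq_mul]
        by_cases hs : sadd n d (Sym2.mk c e) = (fun i => (γ.1 i : ℕ))
        · rw [if_pos hs, coeff_mul n d a b c e]
          simp [hs]
        · simp [hs]
    rw [Finset.sum_congr rfl fun p _ => hterm p, Finset.sum_ite_eq' Finset.univ]
    simp only [Finset.mem_univ, if_true]
    have hsadd : sadd n d (Sym2.mk a b) = fun i => (a.1 i : ℕ) + (b.1 i : ℕ) := rfl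
    rw [hsadd]
    by_cases h : γ = gsum n d a b
    · rw [if_pos ((gsum_iff n d a b γ).mpr h), if_pos h]
    · rw [if_neg (fun hc => h ((gsum_iff n d a b γ).mp hc)), if_neg h]
  -- the key linear formula
  have key : ∀ (x : Gg n d →₀ ℝ) (a b : Dd n d),
      ψ (ι x) a b = x (gsum n d a b) := by
    intro x
    induction x using Finsupp.induction_linear with
    | zero => intro a b; simp
    | add f g hf hg =>
      intro a b
      rw [map_add, map_add, Matrix.add_apply, hf a b, hg a b, Finsupp.add_apply]
    | single γ c =>
      intro a b
      have h1 : (Finsupp.single γ c : Gg n d →₀ ℝ) = c • Finsupp.single γ 1 := by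
        simp
      rw [h1, _root_.map_smul, _root_.map_smul, Matrix.smul_apply, single1, smul_eq_mul,
        Finsupp.smul_apply, Finsupp.single_apply, smul_eq_mul]
  apply le_antisymm
  · rintro X ⟨m, ⟨x, rfl⟩, rfl⟩
    intro a b a' b' h
    rw [key, key]
    congr 1
    apply Subtype.ext; funext i
    exact Fin.ext (congrFun h i)
  · intro X hX
    set x : Gg n d →₀ ℝ := Finsupp.equivFunOnFinite.symm
      (fun γ => if h : ∃ ab : Dd n d × Dd n d, γ = gsum n d ab.1 ab.2
        then X h.choose.1 h.choose.2 else 0) with hx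
    refine ⟨ι x, ⟨x, rfl⟩, ?_⟩
    ext a b
    rw [key]
    have hex : ∃ ab : Dd n d × Dd n d, gsum n d a b = gsum n d ab.1 ab.2 := ⟨(a, b), rfl⟩
    have hxval : x (gsum n d a b) = X hex.choose.1 hex.choose.2 := by
      simp only [hx, Finsupp.coe_equivFunOnFinite_symm, dif_pos hex]
    rw [hxval]
    apply hX
    have := hex.choose_spec
    funext i
    exact (congrFun (congrArg (fun g : Gg n d => fun i => (g.1 i : ℕ)) this) i).symm
end
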